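/- arXiv:1604.02760 — 3 statements merged into one kernel-verified Lean document; each statement's English description precedes it below -/
import Mathlib

section
/- Let Δ = {(x,y) ∈ ℝ² : x + y < 1, 0 < x, 0 < y} and g(x,y) = ((1-x-y)/(x+y))·((1-y)/y). Then the set C_g = {(x,y) ∈ Δ : x + 2y - xy - y² < 3/4} is convex. -/
set_option maxHeartbeats 1000000 in
/-- The set `C_g = {(x,y) ∈ Δ : x + 2y - xy - y² < 3/4}`, where
`Δ = {(x,y) : x + y < 1, 0 < x, 0 < y}`, is convex. -/
theorem Cg_convex :
    Convex ℝ {p : ℝ × ℝ |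
      (p.1 + p.2 < 1 ∧ 0 < p.1 ∧ 0 < p.2) ∧
      p.1 + 2 * p.2 - p.1 * p.2 - p.2 ^ 2 < 3 / 4} := by
  
  rintro ⟨x1, y1⟩ ⟨⟨hs1, hx1, hy1⟩, hg1⟩ ⟨x2, y2⟩ ⟨⟨hs2, hx2, hy2⟩, hg2⟩ a b ha hb hab
  simp only [Set.mem_setOf_eq, Prod.smul_mk, Prod.mk_add_mk, smul_eq_mul] at *
  -- rewrite the quartic conditions as products
  have h1 : (1 - y1) * (1 - x1 - y1) > 1/4 := by nlinarith
  have h2 : (1 - y2) * (1 - x2 - y2) > 1/4 := by nlinarith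
  have u1 : (0:ℝ) < 1 - y1 := by nlinarith
  have v1 : (0:ℝ) < 1 - x1 - y1 := by linarith
  have u2 : (0:ℝ) < 1 - y2 := by nlinarith
  have v2 : (0:ℝ) < 1 - x2 - y2 := by linarith
  have hS : (1 - y1) * (1 - x2 - y2) + (1 - y2) * (1 - x1 - y1) > 1/2 := by
    nlinarith [sq_nonneg ((1 - y1) * (1 - x2 - y2) - (1 - y2) * (1 - x1 - y1)),
      mul_pos u1 v2, mul_pos u2 v1, mul_pos (h1.trans_le' (by norm_num)) (h2.trans_le' (by norm_num))]
  rcases ha.eq_or_lt with rfl0 | hapos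
  · obtain rfl : b = 1 := by linarith
    simp only [← rfl0, zero_mul, zero_add, one_mul]
    exact ⟨⟨by linarith, by linarith, by linarith⟩, by nlinarith [hg2]⟩
  rcases hb.eq_or_lt with rfl0 | hbpos
  · obtain rfl : a = 1 := by linarith
    simp only [← rfl0, mul_zero, add_zero, one_mul]
    exact ⟨⟨by linarith, by linarith, by linarith⟩, by nlinarith [hg1]⟩
  obtain rfl : b = 1 - a := by linarith
  have key : a ^ 2 * ((1 - y1) * (1 - x1 - y1)) + (1 - a) ^ 2 * ((1 - y2) * (1 - x2 - y2))
      + a * (1 - a) * ((1 - y1) * (1 - x2 - y2) + (1 - y2) * (1 - x1 - y1)) > 1 / 4 := by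
    have t1 := mul_lt_mul_of_pos_left h1 (pow_pos hapos 2)
    have t2 := mul_lt_mul_of_pos_left h2 (pow_pos hbpos 2)
    have t3 := mul_lt_mul_of_pos_left hS (mul_pos hapos hbpos)
    linarith [t1, t2, t3]
  refine ⟨⟨?_, ?_, ?_⟩, ?_⟩
  · nlinarith [mul_lt_mul_of_pos_left hs1 hapos, mul_lt_mul_of_pos_left hs2 hbpos]
  · nlinarith [mul_pos hapos hx1, mul_pos hbpos hx2]
  · nlinarith [mul_pos hapos hy1, mul_pos hbpos hy2]
  · nlinarith [key]
end

section
/- Let α > 9 satisfy 21α⁴ - 496α³ - 654α² + 24α + 81 = 0. Set x₁ = 3/(3+α), x₂ = x₃ = 3(α-1)/(21α²+14α-3), and x₇ = 1/(1+3α). Then ((1 - 2(x₁+x₂+x₃) - x₇)/(2(x₁+x₂+x₃)+x₇)) · ((1-x₁)/x₁) = α. -/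
/-- For `α > 9` a root of `21x⁴-496x³-654x²+24x+81`, with `x₁ = 3/(3+α)`,
`x₂ = x₃ = 3(α-1)/(21α²+14α-3)` and `x₇ = 1/(1+3α)`, one has
`((1 - 2(x₁+x₂+x₃) - x₇)/(2(x₁+x₂+x₃)+x₇)) · ((1-x₁)/x₁) = α`. -/
theorem f1_at_xstar (α : ℝ) (hα9 : 9 < α)
    (hαroot : 21 * α ^ 4 - 496 * α ^ 3 - 654 * α ^ 2 + 24 * α + 81 = 0)
    (x₁ x₂ x₃ x₇ : ℝ) (hx₁ : x₁ = 3 / (3 + α))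
    (hx₂ : x₂ = 3 * (α - 1) / (21 * α ^ 2 + 14 * α - 3))
    (hx₃ : x₃ = 3 * (α - 1) / (21 * α ^ 2 + 14 * α - 3))
    (hx₇ : x₇ = 1 / (1 + 3 * α)) :
    ((1 - 2 * (x₁ + x₂ + x₃) - x₇) / (2 * (x₁ + x₂ + x₃) + x₇)) * ((1 - x₁) / x₁) = α := by
  subst hx₁ hx₂ hx₃ hx₇
  have hA : (0:ℝ) < 3 + α := by linarith
  have hB : (0:ℝ) < 21 * α ^ 2 + 14 * α - 3 := by nlinarith
  have hC : (0:ℝ) < 1 + 3 * α := by linarith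
  have hx1 : (0:ℝ) < 3 / (3 + α) := by positivity
  have hx2 : (0:ℝ) < 3 * (α - 1) / (21 * α ^ 2 + 14 * α - 3) := by
    apply div_pos (by linarith) hB
  have hx7 : (0:ℝ) < 1 / (1 + 3 * α) := by positivity
  have hs : (0:ℝ) < 2 * (3 / (3 + α) + 3 * (α - 1) / (21 * α ^ 2 + 14 * α - 3)
      + 3 * (α - 1) / (21 * α ^ 2 + 14 * α - 3)) + 1 / (1 + 3 * α) := by linarith
  rw [div_mul_div_comm, div_eq_iff (by positivity)]
  field_simp [show α * (α * 21 + 14) - 3 ≠ 0 by nlinarith]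
  ring_nf
  nlinarith [hαroot, sq_nonneg α, mul_pos hA hB]
end

section
/- Let α = 24.8692... be the real root of 21x⁴-496x³-654x²+24x+81 greater than 9, and let x* ∈ Δ²⁷ have coordinates x*ₗ = 3/(3+α) for l ∈ {1,5,9,13,15,19,23,27}, x*ₗ = 1/(1+3α) for l ∈ {7,14,21,28}, and x*ₗ = 3(α-1)/(21α²+14α-3) otherwise. Then for g₁(x) = ((1 - Σ_{l∉{8,9,10}} xₗ)/(Σ_{l∉{8,9,10}} xₗ))·((1-x₁)/x₁) one has g₁(x*) < α. -/
/-- Let `α` be the real root of `21x⁴-496x³-654x²+24x+81` greater than `9`, and let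
`x* ∈ Δ²⁷` have (1-based) coordinates `3/(3+α)` at indices `{1,5,9,13,15,19,23,27}`,
`1/(1+3α)` at indices `{7,14,21,28}`, and `3(α-1)/(21α²+14α-3)` otherwise.  Then for
`g₁(x) = ((1 - Σ_{l∉{8,9,10}} xₗ)/(Σ_{l∉{8,9,10}} xₗ)) · ((1-x₁)/x₁)` one has
`g₁(x*) < α`. -/
theorem g1_at_xstar_lt (α : ℝ) (hα9 : 9 < α)
    (hαroot : 21 * α ^ 4 - 496 * α ^ 3 - 654 * α ^ 2 + 24 * α + 81 = 0) :
    let x : Fin 28 → ℝ := fun l =>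
      if l.val + 1 ∈ ({1, 5, 9, 13, 15, 19, 23, 27} : Finset ℕ) then 3 / (3 + α)
      else if l.val + 1 ∈ ({7, 14, 21, 28} : Finset ℕ) then 1 / (1 + 3 * α)
      else 3 * (α - 1) / (21 * α ^ 2 + 14 * α - 3)
    ((1 - ∑ l ∈ Finset.univ.filter (fun l : Fin 28 => l.val + 1 ∉ ({8, 9, 10} : Finset ℕ)), x l) /
        (∑ l ∈ Finset.univ.filter (fun l : Fin 28 => l.val + 1 ∉ ({8, 9, 10} : Finset ℕ)), x l)) *
      ((1 - x 0) / x 0) < α := by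
  intro x
  have hα25 : α < 25 := by nlinarith [sq_nonneg α, sq_nonneg (α - 9), sq_nonneg (α - 25), sq_nonneg (α*α - 25*α)]
  have h1 : (0:ℝ) < 3 + α := by linarith
  have h2 : (0:ℝ) < 1 + 3 * α := by linarith
  have h3 : (0:ℝ) < 21 * α ^ 2 + 14 * α - 3 := by nlinarith
  have hsum : ∑ l ∈ Finset.univ.filter (fun l : Fin 28 => l.val + 1 ∉ ({8, 9, 10} : Finset ℕ)), x l
      = 7 * (3 / (3 + α)) + 4 * (1 / (1 + 3 * α)) + 14 * (3 * (α - 1) / (21 * α ^ 2 + 14 * α - 3)) := by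
    rw [Finset.sum_filter]
    simp only [x]
    norm_num [Fin.sum_univ_succ]
    ring
  have hx0 : x 0 = 3 / (3 + α) := by norm_num [x]
  rw [hsum, hx0]
  set S : ℝ := 7 * (3 / (3 + α)) + 4 * (1 / (1 + 3 * α)) + 14 * (3 * (α - 1) / (21 * α ^ 2 + 14 * α - 3)) with hS
  clear_value S
  have hS4 : 1/4 < S := by
    have t1 : (3:ℝ)/4 < 7 * (3 / (3 + α)) := by
      rw [show (7:ℝ) * (3 / (3 + α)) = 21 / (3 + α) by ring, lt_div_iff₀ h1]
      nlinarith
    have t2 : (0:ℝ) < 4 * (1 / (1 + 3 * α)) := by positivity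
    have t3 : (0:ℝ) ≤ 14 * (3 * (α - 1) / (21 * α ^ 2 + 14 * α - 3)) := by
      apply mul_nonneg (by norm_num)
      exact div_nonneg (by nlinarith) (le_of_lt h3)
    rw [hS]; linarith
  have hr : (1 - 3 / (3 + α)) / (3 / (3 + α)) = α / 3 := by
    field_simp
    ring
  rw [hr]
  have h13 : (1 - S) / S < 3 := by
    rw [div_lt_iff₀ (by linarith : (0:ℝ) < S)]
    linarith
  calc (1 - S) / S * (α / 3) < 3 * (α / 3) := by
        apply mul_lt_mul_of_pos_right h13 (by linarith)
      _ = α := by ring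
end
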